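/- In the finite-horizon MDP setting, define the target-policy Q-functions recursively by Q_T^{π_e}(s, a) = r(s, a) and, for t < T, Q_t^{π_e}(s, a) = r(s, a) + γ·∑_{s' ∈ 𝒮} P(s)(a)(s')·∑_{a' ∈ 𝒜} π_e(s')(a')·Q_{t+1}^{π_e}(s', a'). For a trajectory h define the Bellman residual U_t(h) = r(s_t, a_t) − Q_t^{π_e}(s_t, a_t) + γ·∑_{a' ∈ 𝒜} π_e(s_{t+1})(a')·Q_{t+1}^{π_e}(s_{t+1}, a') for t < T, and U_T(h) = r(s_T, a_T) − Q_T^{π_e}(s_T, a_T). Then for every t ∈ {0,…,T} and every function f : (𝒮 × 𝒜)^{t+1} → ℝ, ∑_h p_{π_b}(h) · U_t(h) · f(s_0, a_0, …, s_t, a_t) = 0. -/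

import Mathlib

open Finset

/-- Probability of a horizon-`T` trajectory `h = (s₀,a₀,…,s_T,a_T)` under initial
distribution `μ0`, transitions `P` and policy `π`. -/
noncomputable def trajProb {𝒮 𝒜 : Type*} (T : ℕ) (μ0 : 𝒮 → ℝ)
    (P : 𝒮 → 𝒜 → 𝒮 → ℝ) (π : 𝒮 → 𝒜 → ℝ) (h : Fin (T + 1) → 𝒮 × 𝒜) : ℝ :=
  μ0 (h 0).1 * (∏ t : Fin (T + 1), π (h t).1 (h t).2) *
    ∏ t : Fin T, P (h t.castSucc).1 (h t.castSucc).2 (h t.succ).1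

section Aux

variable {𝒮 𝒜 : Type*} [Fintype 𝒮] [Fintype 𝒜]

noncomputable def chainP (μ0 : 𝒮 → ℝ) (P : 𝒮 → 𝒜 → 𝒮 → ℝ) (πb : 𝒮 → 𝒜 → ℝ)
    (m : ℕ) (g : Fin (m + 1) → 𝒮 × 𝒜) : ℝ :=
  μ0 (g 0).1 * (∏ t : Fin (m + 1), πb (g t).1 (g t).2) *
    ∏ t : Fin m, P (g t.castSucc).1 (g t.castSucc).2 (g t.succ).1

lemma sum_snoc' (n : ℕ) (F : (Fin (n + 1) → 𝒮 × 𝒜) → ℝ) :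
    ∑ g : Fin (n + 1) → 𝒮 × 𝒜, F g =
      ∑ g₀ : Fin n → 𝒮 × 𝒜, ∑ x : 𝒮 × 𝒜, F (Fin.snoc g₀ x) := by
  rw [← (Fin.snocEquiv (fun _ => (𝒮 × 𝒜))).sum_comp F]
  rw [Fintype.sum_prod_type]
  rw [Finset.sum_comm]
  rfl

lemma chainP_snoc (μ0 : 𝒮 → ℝ) (P : 𝒮 → 𝒜 → 𝒮 → ℝ) (πb : 𝒮 → 𝒜 → ℝ)
    (m : ℕ) (g₀ : Fin (m + 1) → 𝒮 × 𝒜) (x : 𝒮 × 𝒜) :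
    chainP μ0 P πb (m + 1) (Fin.snoc g₀ x) =
      chainP μ0 P πb m g₀ *
        (πb x.1 x.2 * P (g₀ (Fin.last m)).1 (g₀ (Fin.last m)).2 x.1) := by
  unfold chainP
  have h0 : (Fin.snoc g₀ x : Fin (m+2) → 𝒮 × 𝒜) 0 = g₀ 0 := by
    have : (0 : Fin (m+2)) = Fin.castSucc 0 := rfl
    rw [this, Fin.snoc_castSucc]
  have h1 : ∏ t : Fin (m+2), πb ((Fin.snoc g₀ x : Fin (m+2) → 𝒮 × 𝒜) t).1
      ((Fin.snoc g₀ x : Fin (m+2) → 𝒮 × 𝒜) t).2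
      = (∏ t : Fin (m+1), πb (g₀ t).1 (g₀ t).2) * πb x.1 x.2 := by
    rw [Fin.prod_univ_castSucc]
    simp [Fin.snoc_castSucc, Fin.snoc_last]
  have h2 : ∏ t : Fin (m+1), P ((Fin.snoc g₀ x : Fin (m+2) → 𝒮 × 𝒜) t.castSucc).1
      ((Fin.snoc g₀ x : Fin (m+2) → 𝒮 × 𝒜) t.castSucc).2
      ((Fin.snoc g₀ x : Fin (m+2) → 𝒮 × 𝒜) t.succ).1
      = (∏ t : Fin m, P (g₀ t.castSucc).1 (g₀ t.castSucc).2 (g₀ t.succ).1) *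
        P (g₀ (Fin.last m)).1 (g₀ (Fin.last m)).2 x.1 := by
    rw [Fin.prod_univ_castSucc]
    simp [Fin.snoc_castSucc, Fin.snoc_last, Fin.succ_castSucc, -Fin.castSucc_succ]
  rw [h0, h1, h2]
  ring

lemma chainP_step (μ0 : 𝒮 → ℝ) (P : 𝒮 → 𝒜 → 𝒮 → ℝ) (πb : 𝒮 → 𝒜 → ℝ)
    (hPsum : ∀ s a, ∑ s', P s a s' = 1) (hπbsum : ∀ s, ∑ a, πb s a = 1)
    (m : ℕ) (G : (Fin (m + 1) → 𝒮 × 𝒜) → ℝ) :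
    ∑ g : Fin (m + 2) → 𝒮 × 𝒜, chainP μ0 P πb (m + 1) g * G (fun j => g j.castSucc) =
      ∑ g : Fin (m + 1) → 𝒮 × 𝒜, chainP μ0 P πb m g * G g := by
  rw [sum_snoc']
  refine Finset.sum_congr rfl fun g₀ _ => ?_
  have hrest : ∀ x : 𝒮 × 𝒜, (fun j : Fin (m+1) => (Fin.snoc g₀ x : Fin (m+2) → 𝒮 × 𝒜) j.castSucc) = g₀ := by
    intro x; funext j; rw [Fin.snoc_castSucc]
  calc ∑ x : 𝒮 × 𝒜, chainP μ0 P πb (m+1) (Fin.snoc g₀ x) *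
        G (fun j => (Fin.snoc g₀ x : Fin (m+2) → 𝒮 × 𝒜) j.castSucc)
      = ∑ x : 𝒮 × 𝒜, chainP μ0 P πb m g₀ * G g₀ *
          (πb x.1 x.2 * P (g₀ (Fin.last m)).1 (g₀ (Fin.last m)).2 x.1) := by
        refine Finset.sum_congr rfl fun x _ => ?_
        rw [chainP_snoc, hrest x]; ring
    _ = chainP μ0 P πb m g₀ * G g₀ := by
        rw [← Finset.mul_sum]
        have : ∑ x : 𝒮 × 𝒜, πb x.1 x.2 * P (g₀ (Fin.last m)).1 (g₀ (Fin.last m)).2 x.1 = 1 := by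
          rw [Fintype.sum_prod_type]
          have h1 : ∀ s' : 𝒮, ∑ a' : 𝒜, πb s' a' * P (g₀ (Fin.last m)).1 (g₀ (Fin.last m)).2 s'
              = P (g₀ (Fin.last m)).1 (g₀ (Fin.last m)).2 s' := fun s' => by
            rw [← Finset.sum_mul, hπbsum, one_mul]
          rw [Finset.sum_congr rfl fun s' _ => h1 s', hPsum]
        rw [this, mul_one]

lemma chainP_marg (μ0 : 𝒮 → ℝ) (P : 𝒮 → 𝒜 → 𝒮 → ℝ) (πb : 𝒮 → 𝒜 → ℝ)
    (hPsum : ∀ s a, ∑ s', P s a s' = 1) (hπbsum : ∀ s, ∑ a, πb s a = 1) :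
    ∀ (M m : ℕ) (hm : m ≤ M) (G : (Fin (m + 1) → 𝒮 × 𝒜) → ℝ),
    ∑ g : Fin (M + 1) → 𝒮 × 𝒜, chainP μ0 P πb M g *
        G (fun j : Fin (m + 1) => g (Fin.castLE (Nat.succ_le_succ hm) j)) =
      ∑ g : Fin (m + 1) → 𝒮 × 𝒜, chainP μ0 P πb m g * G g := by
  intro M
  induction M with
  | zero => intro m hm G
            interval_cases m
            simp only [Fin.castLE_rfl]
            rfl
  | succ M ih =>
      intro m hm G
      rcases Nat.lt_succ_iff_lt_or_eq.mp (Nat.lt_succ_of_le hm) with h | h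
      · have h' : m ≤ M := Nat.lt_succ_iff.mp h
        have key := chainP_step μ0 P πb hPsum hπbsum M
          (fun g' : Fin (M + 1) → 𝒮 × 𝒜 =>
            G (fun j : Fin (m + 1) => g' (Fin.castLE (Nat.succ_le_succ h') j)))
        calc ∑ g : Fin (M + 2) → 𝒮 × 𝒜, chainP μ0 P πb (M + 1) g *
              G (fun j : Fin (m + 1) => g (Fin.castLE (Nat.succ_le_succ hm) j))
            = ∑ g : Fin (M + 2) → 𝒮 × 𝒜, chainP μ0 P πb (M + 1) g *
              (fun g' : Fin (M + 1) → 𝒮 × 𝒜 =>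
                G (fun j : Fin (m + 1) => g' (Fin.castLE (Nat.succ_le_succ h') j)))
                (fun j => g j.castSucc) := rfl
          _ = ∑ g : Fin (M + 1) → 𝒮 × 𝒜, chainP μ0 P πb M g *
              (fun g' : Fin (M + 1) → 𝒮 × 𝒜 =>
                G (fun j : Fin (m + 1) => g' (Fin.castLE (Nat.succ_le_succ h') j))) g := key
          _ = ∑ g : Fin (m + 1) → 𝒮 × 𝒜, chainP μ0 P πb m g * G g := ih m h' G
      · subst h
        rfl
    
end Aux

/-- Orthogonality of the Bellman residuals of the correctly specified target-policy
Q-functions to every function of the history up to time `t`, under the behavior-policy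
trajectory distribution. -/
theorem stmt_17 {𝒮 𝒜 : Type*} [Fintype 𝒮] [Nonempty 𝒮] [Fintype 𝒜] [Nonempty 𝒜]
    [DecidableEq 𝒮] [DecidableEq 𝒜]
    (T : ℕ) (γ : ℝ) (μ0 : 𝒮 → ℝ) (P : 𝒮 → 𝒜 → 𝒮 → ℝ) (r : 𝒮 → 𝒜 → ℝ)
    (hμ0 : ∀ s, 0 ≤ μ0 s) (hμ0sum : ∑ s, μ0 s = 1)
    (hP : ∀ s a s', 0 ≤ P s a s') (hPsum : ∀ s a, ∑ s', P s a s' = 1)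
    (πb πe : 𝒮 → 𝒜 → ℝ)
    (hπb : ∀ s a, 0 < πb s a) (hπbsum : ∀ s, ∑ a, πb s a = 1)
    (hπe : ∀ s a, 0 ≤ πe s a) (hπesum : ∀ s, ∑ a, πe s a = 1)
    -- the target-policy Q-functions, defined by backward recursion
    (Q : Fin (T + 1) → 𝒮 → 𝒜 → ℝ)
    (hQlast : ∀ s a, Q (Fin.last T) s a = r s a)
    (hQrec : ∀ t : Fin T, ∀ s a, Q t.castSucc s a =
      r s a + γ * ∑ s', P s a s' * ∑ a', πe s' a' * Q t.succ s' a')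
    -- the Bellman residuals
    (U : Fin (T + 1) → (Fin (T + 1) → 𝒮 × 𝒜) → ℝ)
    (hU : ∀ t : Fin T, ∀ h : Fin (T + 1) → 𝒮 × 𝒜, U t.castSucc h =
      r (h t.castSucc).1 (h t.castSucc).2 - Q t.castSucc (h t.castSucc).1 (h t.castSucc).2 +
        γ * ∑ a', πe (h t.succ).1 a' * Q t.succ (h t.succ).1 a')
    (hUlast : ∀ h : Fin (T + 1) → 𝒮 × 𝒜, U (Fin.last T) h =
      r (h (Fin.last T)).1 (h (Fin.last T)).2 -
        Q (Fin.last T) (h (Fin.last T)).1 (h (Fin.last T)).2) :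
    ∀ t : Fin (T + 1), ∀ f : (Fin ((t : ℕ) + 1) → 𝒮 × 𝒜) → ℝ,
      ∑ h : Fin (T + 1) → 𝒮 × 𝒜,
        trajProb T μ0 P πb h * U t h * f (fun j => h (Fin.castLE t.isLt j)) = 0 := by
  intro t
  induction t using Fin.lastCases with
  | last =>
    intro f
    refine Finset.sum_eq_zero fun h _ => ?_
    rw [hUlast h, hQlast]
    ring
  | cast t' =>
    intro f
    have hm : t'.val + 1 ≤ T := t'.isLt
    -- the conditional-expectation integrand, a function of the first t+2 coordinates
    set G : (Fin (t'.val + 2) → 𝒮 × 𝒜) → ℝ := fun g =>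
      (r (g (Fin.castSucc (Fin.last t'.val))).1 (g (Fin.castSucc (Fin.last t'.val))).2
        - Q t'.castSucc (g (Fin.castSucc (Fin.last t'.val))).1
            (g (Fin.castSucc (Fin.last t'.val))).2
        + γ * ∑ a', πe (g (Fin.last (t'.val + 1))).1 a' *
            Q t'.succ (g (Fin.last (t'.val + 1))).1 a')
      * f (fun j => g j.castSucc) with hG
    have key := chainP_marg μ0 P πb hPsum hπbsum T (t'.val + 1) hm G
    calc ∑ h : Fin (T + 1) → 𝒮 × 𝒜,
          trajProb T μ0 P πb h * U t'.castSucc h *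
            f (fun j => h (Fin.castLE (Fin.castSucc t').isLt j))
        = ∑ h : Fin (T + 1) → 𝒮 × 𝒜, chainP μ0 P πb T h *
            G (fun j : Fin (t'.val + 2) => h (Fin.castLE (Nat.succ_le_succ hm) j)) := by
          refine Finset.sum_congr rfl fun h _ => ?_
          rw [hU t' h, mul_assoc]
          rfl
      _ = ∑ g : Fin (t'.val + 2) → 𝒮 × 𝒜, chainP μ0 P πb (t'.val + 1) g * G g := key
      _ = 0 := by
          rw [sum_snoc' (t'.val + 1) (fun g => chainP μ0 P πb (t'.val + 1) g * G g)]
          refine Finset.sum_eq_zero fun g₀ _ => ?_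
          set s : 𝒮 := (g₀ (Fin.last t'.val)).1 with hs
          set a : 𝒜 := (g₀ (Fin.last t'.val)).2 with ha
          set A : ℝ := r s a - Q t'.castSucc s a with hA
          set B : 𝒮 → ℝ := fun s' => ∑ a', πe s' a' * Q t'.succ s' a' with hB
          have hGs : ∀ x : 𝒮 × 𝒜, G (Fin.snoc g₀ x) = (A + γ * B x.1) * f g₀ := by
            intro x
            rw [hG]
            simp only [Fin.snoc_castSucc, Fin.snoc_last]
            rfl
          have hsum : ∑ x : 𝒮 × 𝒜, πb x.1 x.2 * (P s a x.1 * (A + γ * B x.1))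
              = A + γ * ∑ s', P s a s' * B s' := by
            rw [Fintype.sum_prod_type]
            have h1 : ∀ s' : 𝒮, ∑ a' : 𝒜, πb s' a' * (P s a s' * (A + γ * B s'))
                = P s a s' * (A + γ * B s') := fun s' => by
              rw [← Finset.sum_mul, hπbsum, one_mul]
            rw [Finset.sum_congr rfl fun s' _ => h1 s']
            calc ∑ s', P s a s' * (A + γ * B s')
                = ∑ s', (P s a s' * A + γ * (P s a s' * B s')) := by
                  refine Finset.sum_congr rfl fun s' _ => ?_; ring
              _ = (∑ s', P s a s') * A + γ * ∑ s', P s a s' * B s' := by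
                  rw [Finset.sum_add_distrib, ← Finset.sum_mul, ← Finset.mul_sum]
              _ = A + γ * ∑ s', P s a s' * B s' := by rw [hPsum, one_mul]
          have hzero : A + γ * ∑ s', P s a s' * B s' = 0 := by
            have hq := hQrec t' s a
            simp only [hA, hB]
            beta_reduce
            linarith [hq]
          calc ∑ x : 𝒮 × 𝒜, chainP μ0 P πb (t'.val + 1) (Fin.snoc g₀ x) * G (Fin.snoc g₀ x)
              = ∑ x : 𝒮 × 𝒜, (chainP μ0 P πb t'.val g₀ * f g₀) *
                  (πb x.1 x.2 * (P s a x.1 * (A + γ * B x.1))) := by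
                refine Finset.sum_congr rfl fun x _ => ?_
                rw [chainP_snoc, hGs x]
                ring
            _ = (chainP μ0 P πb t'.val g₀ * f g₀) *
                  ∑ x : 𝒮 × 𝒜, πb x.1 x.2 * (P s a x.1 * (A + γ * B x.1)) := by
                rw [Finset.mul_sum]
            _ = 0 := by rw [hsum, hzero, mul_zero]
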